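/- ∑_{m=0}^∞ m·3·∫_0^1 (1-a)^3/(1+a)·(2a/(1+a))^m da = 6·∫_0^1 a(1-a) da = 1, i.e. the mean number of T-type vertices in the relative interior of the typical I-segment equals 1. -/

import Mathlib

open MeasureTheory Set
open scoped ENNReal NNReal

noncomputable def Fst (m : ℕ) (a : ℝ) : ℝ :=
  ((m : ℝ) * 3) * ((1 - a) ^ 3 / (1 + a) * (2 * a / (1 + a)) ^ m)

lemma Fst_summable {a : ℝ} (ha : a ∈ Ioc (0:ℝ) 1) : Summable fun m => Fst m a := by
  rcases eq_or_lt_of_le ha.2 with h1 | h1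
  · subst h1
    have : (fun m => Fst m 1) = fun _ => 0 := by
      funext m; simp [Fst]
    rw [this]; exact summable_zero
  · have hx : ‖2 * a / (1 + a)‖ < 1 := by
      rw [Real.norm_eq_abs, abs_of_nonneg (div_nonneg (by linarith [ha.1]) (by linarith [ha.1]))]
      rw [div_lt_one (by linarith [ha.1])]
      linarith
    have hs : Summable fun m : ℕ => (m : ℝ) * (2 * a / (1 + a)) ^ m := by
      have := summable_pow_mul_geometric_of_norm_lt_one (R := ℝ) 1 hx
      simpa using this
    have := hs.mul_left (3 * ((1 - a) ^ 3 / (1 + a)))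
    refine this.congr fun m => ?_
    simp [Fst]; ring

lemma Fst_tsum {a : ℝ} (ha : a ∈ Ioc (0:ℝ) 1) :
    ∑' m, Fst m a = 6 * (a * (1 - a)) := by
  rcases eq_or_lt_of_le ha.2 with h1 | h1
  · subst h1
    have : (fun m => Fst m 1) = fun _ => 0 := by
      funext m; simp [Fst]
    rw [this]; simp
  · have h1a : (1:ℝ) + a ≠ 0 := by linarith [ha.1]
    have hx : ‖2 * a / (1 + a)‖ < 1 := by
      rw [Real.norm_eq_abs, abs_of_nonneg (div_nonneg (by linarith [ha.1]) (by linarith [ha.1]))]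
      rw [div_lt_one (by linarith [ha.1])]
      linarith
    have key : ∑' m : ℕ, (m : ℝ) * (2 * a / (1 + a)) ^ m
        = (2 * a / (1 + a)) / (1 - 2 * a / (1 + a)) ^ 2 :=
      tsum_coe_mul_geometric_of_norm_lt_one hx
    have hrw : (fun m => Fst m a)
        = fun m : ℕ => (3 * ((1 - a) ^ 3 / (1 + a))) * ((m : ℝ) * (2 * a / (1 + a)) ^ m) := by
      funext m; simp [Fst]; ring
    rw [hrw, tsum_mul_left, key]
    have h1ma : (1:ℝ) - a ≠ 0 := by linarith
    rw [show (1:ℝ) - 2 * a / (1 + a) = (1 - a) / (1 + a) by field_simp; ring]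
    rw [div_pow]
    field_simp
    ring

lemma Fst_nonneg {a : ℝ} (ha : a ∈ Ioc (0:ℝ) 1) (m : ℕ) : 0 ≤ Fst m a := by
  have h1 : (0:ℝ) ≤ 1 - a := by linarith [ha.2]
  have h2 : (0:ℝ) ≤ 1 + a := by linarith [ha.1]
  have h3 : (0:ℝ) ≤ 2 * a := by linarith [ha.1]
  exact mul_nonneg (by positivity) (mul_nonneg (div_nonneg (pow_nonneg h1 3) h2)
    (pow_nonneg (div_nonneg h3 h2) m))

lemma Fst_meas (m : ℕ) : Measurable (Fst m) := by
  unfold Fst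
  fun_prop

theorem stit_mean_T_vertices :
    (∑' m : ℕ, (m : ℝ) *
        (3 * ∫ a in (0:ℝ)..1, (1 - a) ^ 3 / (1 + a) * (2 * a / (1 + a)) ^ m)) =
      6 * (∫ a in (0:ℝ)..1, a * (1 - a)) ∧
    6 * (∫ a in (0:ℝ)..1, a * (1 - a)) = 1 := by
  constructor
  · have step1 : ∀ m : ℕ, (m : ℝ) *
        (3 * ∫ a in (0:ℝ)..1, (1 - a) ^ 3 / (1 + a) * (2 * a / (1 + a)) ^ m)
        = ∫ a in Ioc (0:ℝ) 1, Fst m a := by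
      intro m
      rw [← mul_assoc, ← intervalIntegral.integral_const_mul,
        intervalIntegral.integral_of_le zero_le_one]
      rfl
    have hbound : ∑' m : ℕ, ∫⁻ a in Ioc (0:ℝ) 1, ‖Fst m a‖₊ ≠ ⊤ := by
      rw [← lintegral_tsum (fun m => ((Fst_meas m).nnnorm.coe_nnreal_ennreal).aemeasurable)]
      have hle : (∫⁻ a in Ioc (0:ℝ) 1, ∑' m, (‖Fst m a‖₊ : ℝ≥0∞))
          ≤ ∫⁻ _a in Ioc (0:ℝ) 1, (6:ℝ≥0∞) := by
        apply setLIntegral_mono measurable_const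
        intro a ha
        have heq : ∀ m : ℕ, (‖Fst m a‖₊ : ℝ≥0∞) = ENNReal.ofReal (Fst m a) := by
          intro m
          rw [← enorm_eq_nnnorm, ← ofReal_norm, Real.norm_of_nonneg (Fst_nonneg ha m)]
        calc ∑' m, (‖Fst m a‖₊ : ℝ≥0∞) = ∑' m, ENNReal.ofReal (Fst m a) := by
              simp_rw [heq]
          _ = ENNReal.ofReal (∑' m, Fst m a) :=
              (ENNReal.ofReal_tsum_of_nonneg (Fst_nonneg ha) (Fst_summable ha)).symm
          _ = ENNReal.ofReal (6 * (a * (1 - a))) := by rw [Fst_tsum ha]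
          _ ≤ ENNReal.ofReal 6 := ENNReal.ofReal_le_ofReal (by nlinarith [ha.1, ha.2])
          _ = 6 := by norm_num
      refine ne_top_of_le_ne_top ?_ hle
      simp [Real.volume_Ioc]
    calc (∑' m : ℕ, (m : ℝ) *
        (3 * ∫ a in (0:ℝ)..1, (1 - a) ^ 3 / (1 + a) * (2 * a / (1 + a)) ^ m))
        = ∑' m : ℕ, ∫ a in Ioc (0:ℝ) 1, Fst m a := by
          exact tsum_congr step1
      _ = ∫ a in Ioc (0:ℝ) 1, ∑' m, Fst m a :=
          (integral_tsum (fun m => (Fst_meas m).aestronglyMeasurable) hbound).symm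
      _ = ∫ a in Ioc (0:ℝ) 1, 6 * (a * (1 - a)) :=
          setIntegral_congr_fun measurableSet_Ioc fun a ha => Fst_tsum ha
      _ = 6 * ∫ a in Ioc (0:ℝ) 1, a * (1 - a) := integral_const_mul 6 _
      _ = 6 * ∫ a in (0:ℝ)..1, a * (1 - a) := by
          rw [intervalIntegral.integral_of_le zero_le_one]
  · have h : (∫ a in (0:ℝ)..1, a * (1 - a)) = ∫ a in (0:ℝ)..1, (a - a ^ 2) :=
      intervalIntegral.integral_congr fun a _ => by ring
    rw [h, intervalIntegral.integral_sub (intervalIntegral.intervalIntegrable_id) (intervalIntegral.intervalIntegrable_pow 2)]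
    have h2 : (∫ x in (0:ℝ)..1, x) = 1 / 2 := by simp
    have h3 : (∫ x in (0:ℝ)..1, x ^ 2) = 1 / 3 := by simp; norm_num
    rw [h2, h3]; norm_num
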